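/- Let (fₙ) be a sequence of monotone convex functions on [a,b], each differentiable on (a,b), converging uniformly to f. Then the derivatives fₙ' converge to f' in L¹([a,b]) (where f' exists almost everywhere since f is convex). -/

import Mathlib

open MeasureTheory Set Filter
open scoped Topology ENNReal


lemma tail_right {a b c t K : ℝ} {F : ℝ → ℝ}
    (hac : a < c) (hcb : c < b)
    (hdiff : ∀ x ∈ Set.Ioo a b, DifferentiableAt ℝ F x)
    (hmder : MonotoneOn (deriv F) (Set.Ioo a b))
    (ht : ∀ x ∈ Set.Ioo c b, t ≤ deriv F x)
    (hK : ∀ u ∈ Set.Ioo c b, F u - F c - (u - c) * t ≤ K) :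
    ∫⁻ x in Set.Ioo c b, ENNReal.ofReal (deriv F x - t) ≤ ENNReal.ofReal K := by
  set φ : ℝ → ENNReal := fun x => ENNReal.ofReal (deriv F x - t) with hφ
  have hφm : Measurable φ := ((measurable_deriv F).sub measurable_const).ennreal_ofReal
  set u : ℕ → ℝ := fun k => b - (b - c) / (k + 2) with hu
  have hbc : (0:ℝ) < b - c := sub_pos.2 hcb
  have huk : ∀ k, c < u k ∧ u k < b := by
    intro k
    have h2 : (0:ℝ) < (k:ℝ) + 2 := by positivity
    constructor
    · have : (b - c) / (k + 2) ≤ (b - c) / 2 := by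
        apply div_le_div_of_nonneg_left hbc.le (by norm_num)
        · linarith [Nat.cast_nonneg (α := ℝ) k]
      simp only [hu]; linarith
    · simp only [hu]; have : (0:ℝ) < (b - c) / (k + 2) := by positivity
      linarith
  have humono : Monotone u := by
    intro k l hkl
    simp only [hu]
    have : (b - c) / ((l:ℝ) + 2) ≤ (b - c) / ((k:ℝ) + 2) := by
      apply div_le_div_of_nonneg_left hbc.le (by positivity)
      have := Nat.cast_le (α := ℝ).2 hkl
      linarith
    linarith
  have hUnion : Set.Ioo c b = ⋃ k, Set.Ioc c (u k) := by
    ext x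
    simp only [Set.mem_Ioo, Set.mem_iUnion, Set.mem_Ioc]
    constructor
    · rintro ⟨hcx, hxb⟩
      obtain ⟨k, hk⟩ := exists_nat_ge ((b - c) / (b - x))
      refine ⟨k, hcx, ?_⟩
      have hbx : (0:ℝ) < b - x := sub_pos.2 hxb
      have h2 : (0:ℝ) < (k:ℝ) + 2 := by positivity
      have : (b - c) / ((k:ℝ) + 2) ≤ b - x := by
        rw [div_le_iff₀ h2]
        have h1 : (b - c) / (b - x) ≤ (k:ℝ) := hk
        have := (div_le_iff₀ hbx).1 h1
        nlinarith
      simp only [hu]; linarith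
    · rintro ⟨k, hcx, hxu⟩
      exact ⟨hcx, hxu.trans_lt (huk k).2⟩
  -- per-piece bound
  have key : ∀ k, ∫⁻ x in Set.Ioc c (u k), φ x ≤ ENNReal.ofReal K := by
    intro k
    obtain ⟨hcu, hub⟩ := huk k
    have hsub : Set.Icc c (u k) ⊆ Set.Ioo a b := fun x hx =>
      ⟨hac.trans_le hx.1, hx.2.trans_lt hub⟩
    have hInt : IntervalIntegrable (deriv F) volume c (u k) := by
      apply MonotoneOn.intervalIntegrable
      apply hmder.mono
      rwa [Set.uIcc_of_le hcu.le]
    have hIntOn : IntegrableOn (deriv F) (Set.Ioc c (u k)) volume := hInt.1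
    have hftc : ∫ y in c..(u k), deriv F y = F (u k) - F c := by
      apply intervalIntegral.integral_eq_sub_of_hasDerivAt
      · intro x hx
        rw [Set.uIcc_of_le hcu.le] at hx
        exact (hdiff x (hsub hx)).hasDerivAt
      · exact hInt
    have hval : ∫ x in Set.Ioc c (u k), (deriv F x - t) = F (u k) - F c - (u k - c) * t := by
      rw [MeasureTheory.integral_sub hIntOn (integrableOn_const measure_Ioc_lt_top.ne)]
      rw [← intervalIntegral.integral_of_le hcu.le, hftc]
      rw [MeasureTheory.setIntegral_const, Real.volume_real_Ioc_of_le hcu.le,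
        smul_eq_mul]
    have hnn : 0 ≤ᵐ[volume.restrict (Set.Ioc c (u k))] fun x => deriv F x - t := by
      rw [EventuallyLE, ae_restrict_iff' measurableSet_Ioc]
      exact ae_of_all _ fun x hx => sub_nonneg.2 (ht x ⟨hx.1, hx.2.trans_lt hub⟩)
    have : ∫⁻ x in Set.Ioc c (u k), φ x
        = ENNReal.ofReal (∫ x in Set.Ioc c (u k), (deriv F x - t)) :=
      (MeasureTheory.ofReal_integral_eq_lintegral_ofReal
        (hIntOn.sub (integrableOn_const measure_Ioc_lt_top.ne)) hnn).symm
    rw [this, hval]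
    exact ENNReal.ofReal_le_ofReal (hK (u k) ⟨hcu, hub⟩)
  -- combine via withDensity and continuity from below
  have hwd : ∀ s : Set ℝ, MeasurableSet s →
      (volume.withDensity φ) s = ∫⁻ x in s, φ x := fun s hs => withDensity_apply φ hs
  calc ∫⁻ x in Set.Ioo c b, φ x = (volume.withDensity φ) (Set.Ioo c b) :=
        (hwd _ measurableSet_Ioo).symm
    _ = ⨆ k, (volume.withDensity φ) (Set.Ioc c (u k)) := by
        rw [hUnion]
        apply Directed.measure_iUnion
        intro i j
        exact ⟨max i j, Set.Ioc_subset_Ioc_right (humono (le_max_left i j)),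
          Set.Ioc_subset_Ioc_right (humono (le_max_right i j))⟩
    _ ≤ ENNReal.ofReal K := by
        apply iSup_le
        intro k
        rw [hwd _ measurableSet_Ioc]
        exact key k


lemma tail_left {a b c t K : ℝ} {F : ℝ → ℝ}
    (hac : a < c) (hcb : c < b)
    (hdiff : ∀ x ∈ Set.Ioo a b, DifferentiableAt ℝ F x)
    (hmder : MonotoneOn (deriv F) (Set.Ioo a b))
    (ht : ∀ x ∈ Set.Ioo a c, deriv F x ≤ t)
    (hK : ∀ u ∈ Set.Ioo a c, (c - u) * t - (F c - F u) ≤ K) :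
    ∫⁻ x in Set.Ioo a c, ENNReal.ofReal (t - deriv F x) ≤ ENNReal.ofReal K := by
  set φ : ℝ → ENNReal := fun x => ENNReal.ofReal (t - deriv F x) with hφ
  have hφm : Measurable φ := (measurable_const.sub (measurable_deriv F)).ennreal_ofReal
  set u : ℕ → ℝ := fun k => a + (c - a) / (k + 2) with hu
  have hbc : (0:ℝ) < c - a := sub_pos.2 hac
  have huk : ∀ k, a < u k ∧ u k < c := by
    intro k
    have h2 : (0:ℝ) < (k:ℝ) + 2 := by positivity
    constructor
    · simp only [hu]; have : (0:ℝ) < (c - a) / (k + 2) := by positivity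
      linarith
    · have : (c - a) / (k + 2) ≤ (c - a) / 2 := by
        apply div_le_div_of_nonneg_left hbc.le (by norm_num)
        · linarith [Nat.cast_nonneg (α := ℝ) k]
      simp only [hu]; linarith
  have humono : ∀ k l : ℕ, k ≤ l → u l ≤ u k := by
    intro k l hkl
    simp only [hu]
    have : (c - a) / ((l:ℝ) + 2) ≤ (c - a) / ((k:ℝ) + 2) := by
      apply div_le_div_of_nonneg_left hbc.le (by positivity)
      have := Nat.cast_le (α := ℝ).2 hkl
      linarith
    linarith
  have hUnion : Set.Ioo a c = ⋃ k, Set.Ioo (u k) c := by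
    ext x
    simp only [Set.mem_Ioo, Set.mem_iUnion]
    constructor
    · rintro ⟨hax, hxc⟩
      obtain ⟨k, hk⟩ := exists_nat_ge ((c - a) / (x - a))
      refine ⟨k, ?_, hxc⟩
      have hxa : (0:ℝ) < x - a := sub_pos.2 hax
      have h2 : (0:ℝ) < (k:ℝ) + 2 := by positivity
      have : (c - a) / ((k:ℝ) + 2) < x - a := by
        rw [div_lt_iff₀ h2]
        have := (div_le_iff₀ hxa).1 hk
        nlinarith
      simp only [hu]; linarith
    · rintro ⟨k, hux, hxc⟩
      exact ⟨(huk k).1.trans hux, hxc⟩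
  have key : ∀ k, ∫⁻ x in Set.Ioo (u k) c, φ x ≤ ENNReal.ofReal K := by
    intro k
    obtain ⟨hau, huc⟩ := huk k
    have hsub : Set.Icc (u k) c ⊆ Set.Ioo a b := fun x hx =>
      ⟨hau.trans_le hx.1, hx.2.trans_lt hcb⟩
    have hInt : IntervalIntegrable (deriv F) volume (u k) c := by
      apply MonotoneOn.intervalIntegrable
      apply hmder.mono
      rwa [Set.uIcc_of_le huc.le]
    have hIntOn : IntegrableOn (deriv F) (Set.Ioo (u k) c) volume :=
      hInt.1.mono_set Set.Ioo_subset_Ioc_self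
    have hftc : ∫ y in (u k)..c, deriv F y = F c - F (u k) := by
      apply intervalIntegral.integral_eq_sub_of_hasDerivAt
      · intro x hx
        rw [Set.uIcc_of_le huc.le] at hx
        exact (hdiff x (hsub hx)).hasDerivAt
      · exact hInt
    have hftc' : ∫ y in Set.Ioo (u k) c, deriv F y = F c - F (u k) := by
      rw [← MeasureTheory.integral_Ioc_eq_integral_Ioo, ← intervalIntegral.integral_of_le huc.le,
        hftc]
    have hval : ∫ x in Set.Ioo (u k) c, (t - deriv F x) = (c - u k) * t - (F c - F (u k)) := by
      rw [MeasureTheory.integral_sub (integrableOn_const (C := t) measure_Ioo_lt_top.ne) hIntOn]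
      rw [hftc', MeasureTheory.setIntegral_const, Real.volume_real_Ioo_of_le huc.le,
        smul_eq_mul]
    have hnn : 0 ≤ᵐ[volume.restrict (Set.Ioo (u k) c)] fun x => t - deriv F x := by
      rw [EventuallyLE, ae_restrict_iff' measurableSet_Ioo]
      exact ae_of_all _ fun x hx => sub_nonneg.2 (ht x ⟨hau.trans hx.1, hx.2⟩)
    have heq : ∫⁻ x in Set.Ioo (u k) c, φ x
        = ENNReal.ofReal (∫ x in Set.Ioo (u k) c, (t - deriv F x)) :=
      (MeasureTheory.ofReal_integral_eq_lintegral_ofReal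
        ((integrableOn_const (C := t) measure_Ioo_lt_top.ne).sub hIntOn) hnn).symm
    rw [heq, hval]
    exact ENNReal.ofReal_le_ofReal (hK (u k) ⟨hau, huc⟩)
  have hwd : ∀ s : Set ℝ, MeasurableSet s →
      (volume.withDensity φ) s = ∫⁻ x in s, φ x := fun s hs => withDensity_apply φ hs
  calc ∫⁻ x in Set.Ioo a c, φ x = (volume.withDensity φ) (Set.Ioo a c) :=
        (hwd _ measurableSet_Ioo).symm
    _ = ⨆ k, (volume.withDensity φ) (Set.Ioo (u k) c) := by
        rw [hUnion]
        apply Directed.measure_iUnion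
        intro i j
        exact ⟨max i j, Set.Ioo_subset_Ioo_left (humono i (max i j) (le_max_left i j)),
          Set.Ioo_subset_Ioo_left (humono j (max i j) (le_max_right i j))⟩
    _ ≤ ENNReal.ofReal K := by
        apply iSup_le
        intro k
        rw [hwd _ measurableSet_Ioo]
        exact key k


lemma deriv_tendsto_pt {a b : ℝ} {f : ℕ → ℝ → ℝ} {g : ℝ → ℝ}
    (hconv : ∀ n, ConvexOn ℝ (Set.Icc a b) (f n))
    (hdiff : ∀ n, ∀ x ∈ Set.Ioo a b, DifferentiableAt ℝ (f n) x)
    (hptwise : ∀ y ∈ Set.Icc a b, Filter.Tendsto (fun n => f n y) Filter.atTop (nhds (g y)))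
    {x : ℝ} (hx : x ∈ Set.Ioo a b) (hgx : DifferentiableAt ℝ g x) :
    Filter.Tendsto (fun n => deriv (f n) x) Filter.atTop (nhds (deriv g x)) := by
  set D := deriv g x with hD
  rw [Metric.tendsto_nhds]
  intro ε hε
  have hslope : Tendsto (slope g x) (𝓝[≠] x) (𝓝 D) :=
    hasDerivAt_iff_tendsto_slope.1 hgx.hasDerivAt
  have hEv : ∀ᶠ y in 𝓝[≠] x, y ∈ Set.Ioo a b ∧ |slope g x y - D| < ε / 2 := by
    have h1 : ∀ᶠ y in 𝓝[≠] x, y ∈ Set.Ioo a b :=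
      eventually_nhdsWithin_of_eventually_nhds
        ((eventually_mem_nhds_iff.2 ((Ioo_mem_nhds hx.1 hx.2))).mono fun y hy => mem_of_mem_nhds hy)
    have h2 : ∀ᶠ y in 𝓝[≠] x, |slope g x y - D| < ε / 2 := by
      have := hslope.eventually (Metric.ball_mem_nhds D (by positivity : (0:ℝ) < ε / 2))
      filter_upwards [this] with y hy
      simpa [Real.dist_eq] using hy
    exact h1.and h2
  -- pick y₂ > x
  have hle2 : 𝓝[>] x ≤ 𝓝[≠] x := nhdsWithin_mono x fun y hy => ne_of_gt hy
  obtain ⟨y₂, hy₂⟩ := ((hEv.filter_mono hle2).and self_mem_nhdsWithin).exists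
  obtain ⟨⟨hy₂I, hy₂s⟩, hxy₂⟩ := hy₂
  -- pick y₁ < x
  have hle1 : 𝓝[<] x ≤ 𝓝[≠] x := nhdsWithin_mono x fun y hy => ne_of_lt hy
  obtain ⟨y₁, hy₁⟩ := ((hEv.filter_mono hle1).and self_mem_nhdsWithin).exists
  obtain ⟨⟨hy₁I, hy₁s⟩, hxy₁⟩ := hy₁
  have hxIcc : x ∈ Set.Icc a b := Set.Ioo_subset_Icc_self hx
  have hy₁Icc : y₁ ∈ Set.Icc a b := Set.Ioo_subset_Icc_self hy₁I
  have hy₂Icc : y₂ ∈ Set.Icc a b := Set.Ioo_subset_Icc_self hy₂I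
  have hxy₂' : x < y₂ := hxy₂
  have hxy₁' : y₁ < x := hxy₁
  -- slope convergence
  have sconv : ∀ y ∈ Set.Icc a b, y ≠ x →
      Tendsto (fun n => slope (f n) x y) atTop (𝓝 (slope g x y)) := by
    intro y hy hyx
    have : ∀ n, slope (f n) x y = (f n y - f n x) / (y - x) := fun n => slope_def_field _ _ _
    simp only [this, slope_def_field]
    exact ((hptwise y hy).sub (hptwise x hxIcc)).div_const _
  have s2 := sconv y₂ hy₂Icc (ne_of_gt hxy₂')
  have s1 := sconv y₁ hy₁Icc (ne_of_lt hxy₁')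
  have e2 : ∀ᶠ n in atTop, |slope (f n) x y₂ - slope g x y₂| < ε / 2 := by
    have := s2.eventually (Metric.ball_mem_nhds _ (by positivity : (0:ℝ) < ε / 2))
    filter_upwards [this] with n hn
    simpa [Real.dist_eq] using hn
  have e1 : ∀ᶠ n in atTop, |slope (f n) x y₁ - slope g x y₁| < ε / 2 := by
    have := s1.eventually (Metric.ball_mem_nhds _ (by positivity : (0:ℝ) < ε / 2))
    filter_upwards [this] with n hn
    simpa [Real.dist_eq] using hn
  filter_upwards [e1, e2] with n hn1 hn2
  have hub : deriv (f n) x ≤ slope (f n) x y₂ :=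
    (hconv n).deriv_le_slope hxIcc hy₂Icc hxy₂' (hdiff n x hx)
  have hlb : slope (f n) y₁ x ≤ deriv (f n) x :=
    (hconv n).slope_le_deriv hy₁Icc hxIcc hxy₁' (hdiff n x hx)
  rw [slope_comm] at hlb
  rw [Real.dist_eq]
  have h2 := abs_sub_lt_iff.1 hn2
  have h1 := abs_sub_lt_iff.1 hn1
  have hg2 := abs_sub_lt_iff.1 hy₂s
  have hg1 := abs_sub_lt_iff.1 hy₁s
  rw [abs_sub_lt_iff]
  constructor <;> nlinarith [h2.1, h2.2, h1.1, h1.2, hg2.1, hg2.2, hg1.1, hg1.2]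


lemma le_of_freq {u v : ℕ → ℝ} {L M : ℝ} (hu : Tendsto u atTop (𝓝 L))
    (hv : Tendsto v atTop (𝓝 M)) (h : ∃ᶠ n in atTop, u n ≤ v n) : L ≤ M := by
  by_contra hlt
  push_neg at hlt
  have hev : ∀ᶠ n in atTop, v n - u n < 0 :=
    (hv.sub hu).eventually_lt_const (by linarith)
  obtain ⟨n, hn1, hn2⟩ := (h.and_eventually hev).exists
  linarith

lemma tail_pick_right {a b : ℝ} {g : ℝ → ℝ} (hab : a < b)
    (hg : MonotoneOn g (Set.Icc a b) ∨ AntitoneOn g (Set.Icc a b)) {ε : ℝ} (hε : 0 < ε) :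
    ∃ c, (a + b) / 2 < c ∧ c < b ∧ b - c ≤ ε ∧ ∀ y ∈ Set.Ioo c b, g y - g c ≤ ε := by
  set m := (a + b) / 2 with hm
  have hmb : m < b := by simp only [hm]; linarith
  have ham : a < m := by simp only [hm]; linarith
  set δ := min (ε / 2) ((b - m) / 2) with hδ
  have hδ0 : 0 < δ := lt_min (by linarith) (by linarith)
  have hδε : δ ≤ ε := (min_le_left _ _).trans (by linarith)
  have hδm : δ ≤ (b - m) / 2 := min_le_right _ _
  rcases hg with hmon | hanti
  · -- monotone case: sSup argument
    have hne : (g '' Set.Ioo a b).Nonempty := ⟨g m, ⟨m, ⟨ham, hmb⟩, rfl⟩⟩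
    have hbdd : BddAbove (g '' Set.Ioo a b) := by
      refine ⟨g b, ?_⟩
      rintro _ ⟨y, hy, rfl⟩
      exact hmon (Set.Ioo_subset_Icc_self hy) (Set.right_mem_Icc.2 hab.le) hy.2.le
    set S := sSup (g '' Set.Ioo a b) with hS
    obtain ⟨_, ⟨y₀, hy₀I, rfl⟩, hy₀⟩ := exists_lt_of_lt_csSup hne (by linarith : S - ε < S)
    refine ⟨max y₀ (b - δ), ?_, ?_, ?_, ?_⟩
    · exact lt_max_of_lt_right (by linarith)
    · exact max_lt hy₀I.2 (by linarith)
    · have : b - δ ≤ max y₀ (b - δ) := le_max_right _ _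
      linarith
    · intro y hy
      have hcI : max y₀ (b - δ) ∈ Set.Icc a b :=
        ⟨le_trans ham.le (le_of_lt (lt_max_of_lt_right (by linarith))), (max_lt hy₀I.2 (by linarith)).le⟩
      have hgy : g y ≤ S := le_csSup hbdd ⟨y, ⟨lt_trans ham (lt_of_lt_of_le (lt_max_of_lt_right (by linarith : m < b - δ)) hy.1.le), hy.2⟩, rfl⟩
      have hgc : g y₀ ≤ g (max y₀ (b - δ)) :=
        hmon (Set.Ioo_subset_Icc_self hy₀I) hcI (le_max_left _ _)
      linarith
  · -- antitone case: trivial choice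
    refine ⟨b - δ, by linarith, by linarith, by linarith, ?_⟩
    intro y hy
    have h1 : g y ≤ g (b - δ) := by
      apply hanti ⟨by linarith, by linarith⟩ ⟨?_, hy.2.le⟩ hy.1.le
      linarith [hy.1, ham]
    linarith

lemma tail_pick_left {a b : ℝ} {g : ℝ → ℝ} (hab : a < b)
    (hg : MonotoneOn g (Set.Icc a b) ∨ AntitoneOn g (Set.Icc a b)) {ε : ℝ} (hε : 0 < ε) :
    ∃ c, a < c ∧ c < (a + b) / 2 ∧ c - a ≤ ε ∧ ∀ y ∈ Set.Ioo a c, g y - g c ≤ ε := by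
  set m := (a + b) / 2 with hm
  have hmb : m < b := by simp only [hm]; linarith
  have ham : a < m := by simp only [hm]; linarith
  set δ := min (ε / 2) ((m - a) / 2) with hδ
  have hδ0 : 0 < δ := lt_min (by linarith) (by linarith)
  have hδε : δ ≤ ε := (min_le_left _ _).trans (by linarith)
  have hδm : δ ≤ (m - a) / 2 := min_le_right _ _
  rcases hg with hmon | hanti
  · -- monotone case: trivial choice
    refine ⟨a + δ, by linarith, by linarith, by linarith, ?_⟩
    intro y hy
    have h1 : g y ≤ g (a + δ) := by
      apply hmon ⟨hy.1.le, by linarith [hy.2]⟩ ⟨by linarith, by linarith⟩ hy.2.le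
    linarith
  · -- antitone case: sSup argument
    have hne : (g '' Set.Ioo a b).Nonempty := ⟨g m, ⟨m, ⟨ham, hmb⟩, rfl⟩⟩
    have hbdd : BddAbove (g '' Set.Ioo a b) := by
      refine ⟨g a, ?_⟩
      rintro _ ⟨y, hy, rfl⟩
      exact hanti (Set.left_mem_Icc.2 hab.le) (Set.Ioo_subset_Icc_self hy) hy.1.le
    set S := sSup (g '' Set.Ioo a b) with hS
    obtain ⟨_, ⟨y₀, hy₀I, rfl⟩, hy₀⟩ := exists_lt_of_lt_csSup hne (by linarith : S - ε < S)
    refine ⟨min y₀ (a + δ), ?_, ?_, ?_, ?_⟩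
    · exact lt_min hy₀I.1 (by linarith)
    · exact min_lt_of_right_lt (by linarith)
    · have : min y₀ (a + δ) ≤ a + δ := min_le_right _ _
      linarith
    · intro y hy
      have hcI : min y₀ (a + δ) ∈ Set.Icc a b :=
        ⟨(lt_min hy₀I.1 (by linarith)).le, le_trans (min_le_right _ _) (by linarith)⟩
      have hgy : g y ≤ S := by
        apply le_csSup hbdd
        refine ⟨y, ⟨hy.1, ?_⟩, rfl⟩
        exact lt_trans hy.2 (lt_of_le_of_lt (min_le_right _ _) (by linarith))
      have hgc : g y₀ ≤ g (min y₀ (a + δ)) :=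
        hanti hcI (Set.Ioo_subset_Icc_self hy₀I) (min_le_left _ _)
      linarith


set_option maxHeartbeats 2000000 in
theorem stmt_16 (a b : ℝ) (hab : a < b) (f : ℕ → ℝ → ℝ) (g : ℝ → ℝ)
    (hconv : ∀ n, ConvexOn ℝ (Set.Icc a b) (f n))
    (hmono : ∀ n, MonotoneOn (f n) (Set.Icc a b) ∨ AntitoneOn (f n) (Set.Icc a b))
    (hdiff : ∀ n, ∀ x ∈ Set.Ioo a b, DifferentiableAt ℝ (f n) x)
    (hunif : TendstoUniformlyOn f g Filter.atTop (Set.Icc a b)) :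
    Filter.Tendsto (fun n => ∫ x in Set.Ioo a b, |deriv (f n) x - deriv g x|)
      Filter.atTop (nhds 0) := by
  classical
  set m := (a + b) / 2 with hm
  have ham : a < m := by simp only [hm]; linarith
  have hmb : m < b := by simp only [hm]; linarith
  have hpt : ∀ y ∈ Set.Icc a b, Tendsto (fun n => f n y) atTop (𝓝 (g y)) :=
    fun y hy => hunif.tendsto_at hy
  have hg : MonotoneOn g (Set.Icc a b) ∨ AntitoneOn g (Set.Icc a b) := by
    by_cases hfm : ∃ᶠ n in atTop, MonotoneOn (f n) (Set.Icc a b)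
    · exact Or.inl fun x hx y hy hxy =>
        le_of_freq (hpt x hx) (hpt y hy) (hfm.mono fun n hn => hn hx hy hxy)
    · have hfa : ∃ᶠ n in atTop, AntitoneOn (f n) (Set.Icc a b) := by
        rw [Filter.not_frequently] at hfm
        exact (hfm.mono fun n hn => (hmono n).resolve_left hn).frequently
      exact Or.inr fun x hx y hy hxy =>
        le_of_freq (hpt y hy) (hpt x hx) (hfa.mono fun n hn => hn hx hy hxy)
  have hgae : ∀ᵐ x ∂(volume.restrict (Set.Ioo a b)), DifferentiableAt ℝ g x := by
    rcases hg with hmon | hanti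
    · filter_upwards [ae_restrict_mem measurableSet_Ioo,
        ae_restrict_of_ae hmon.ae_differentiableWithinAt_of_mem] with x hx h
      exact (h (Set.Ioo_subset_Icc_self hx)).differentiableAt (Icc_mem_nhds hx.1 hx.2)
    · have hmon : MonotoneOn (fun x => -g x) (Set.Icc a b) :=
        fun x hx y hy hxy => neg_le_neg (hanti hx hy hxy)
      filter_upwards [ae_restrict_mem measurableSet_Ioo,
        ae_restrict_of_ae hmon.ae_differentiableWithinAt_of_mem] with x hx h
      have := ((h (Set.Ioo_subset_Icc_self hx)).differentiableAt (Icc_mem_nhds hx.1 hx.2)).neg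
      simpa using this
  have haeconv : ∀ᵐ x ∂(volume.restrict (Set.Ioo a b)),
      Tendsto (fun n => deriv (f n) x) atTop (𝓝 (deriv g x)) := by
    filter_upwards [hgae, ae_restrict_mem measurableSet_Ioo] with x h1 h2
    exact deriv_tendsto_pt hconv hdiff hpt h2 h1
  have hHm : ∀ n : ℕ, Measurable (deriv (f n)) := fun n => measurable_deriv _
  have hGm : Measurable (deriv g) := measurable_deriv _
  have hmder : ∀ n, MonotoneOn (deriv (f n)) (Set.Ioo a b) := fun n =>
    ((hconv n).subset Set.Ioo_subset_Icc_self (convex_Ioo a b)).monotoneOn_deriv (hdiff n)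
  have main : Tendsto (fun n => ∫⁻ x in Set.Ioo a b,
      ENNReal.ofReal |deriv (f n) x - deriv g x|) atTop (𝓝 0) := by
    rw [ENNReal.tendsto_nhds_zero]
    intro ε hε
    obtain ⟨r, hr0, hrε⟩ := ENNReal.lt_iff_exists_nnreal_btwn.1 hε
    set ε₀ : ℝ := (r : ℝ) with hε₀def
    have hε₀ : 0 < ε₀ := by exact_mod_cast hr0
    suffices h : ∀ᶠ n in atTop, (∫⁻ x in Set.Ioo a b,
        ENNReal.ofReal |deriv (f n) x - deriv g x|) ≤ ENNReal.ofReal ε₀ by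
      filter_upwards [h] with n hn
      refine hn.trans ?_
      rw [hε₀def, ENNReal.ofReal_coe_nnreal]
      exact hrε.le
    -- constants
    set p := a + (b - a) / 4 with hp
    set q := b - (b - a) / 4 with hq
    have hap : a < p := by simp only [hp]; linarith
    have hpm : p < m := by simp only [hp, hm]; linarith
    have hmq : m < q := by simp only [hq, hm]; linarith
    have hqb : q < b := by simp only [hq]; linarith
    set C := |(g m - g p - 2) / (m - p)| + |(g q - g m + 2) / (q - m)| with hCdef
    have hC0 : (0:ℝ) ≤ C := by positivity
    set ε₁ := ε₀ / (24 * (C + 1)) with hε₁def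
    have hε₁ : 0 < ε₁ := by
      rw [hε₁def]; exact div_pos hε₀ (by linarith)
    have hclose : ∀ᶠ n in atTop, ∀ y ∈ Set.Icc a b, |f n y - g y| ≤ min 1 ε₁ := by
      have h := Metric.tendstoUniformlyOn_iff.1 hunif (min 1 ε₁) (lt_min one_pos hε₁)
      filter_upwards [h] with n hn y hy
      have h2 := hn y hy
      rw [Real.dist_eq, abs_sub_comm] at h2
      exact h2.le
    have hmIcc : m ∈ Set.Icc a b := ⟨ham.le, hmb.le⟩
    have hmIoo : m ∈ Set.Ioo a b := ⟨ham, hmb⟩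
    have hCbound : ∀ᶠ n in atTop, |deriv (f n) m| ≤ C := by
      filter_upwards [hclose] with n hn
      have hpm' : (0:ℝ) < m - p := by linarith
      have hqm' : (0:ℝ) < q - m := by linarith
      have hem := abs_le.1 ((hn m hmIcc).trans (min_le_left _ _))
      have hep := abs_le.1 ((hn p ⟨hap.le, (hpm.trans hmb).le⟩).trans (min_le_left _ _))
      have heq' := abs_le.1 ((hn q ⟨(ham.trans hmq).le, hqb.le⟩).trans (min_le_left _ _))
      have h1 : (g m - g p - 2) / (m - p) ≤ deriv (f n) m := by
        have hs : slope (f n) p m ≤ deriv (f n) m :=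
          (hconv n).slope_le_deriv ⟨hap.le, (hpm.trans hmb).le⟩ hmIcc hpm (hdiff n m hmIoo)
        rw [slope_def_field] at hs
        refine le_trans ((div_le_div_iff_of_pos_right hpm').2 (by linarith)) hs
      have h2 : deriv (f n) m ≤ (g q - g m + 2) / (q - m) := by
        have hs : deriv (f n) m ≤ slope (f n) m q :=
          (hconv n).deriv_le_slope hmIcc ⟨(ham.trans hmq).le, hqb.le⟩ hmq (hdiff n m hmIoo)
        rw [slope_def_field] at hs
        exact hs.trans ((div_le_div_iff_of_pos_right hqm').2 (by linarith))
      rw [abs_le]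
      constructor
      · have := neg_abs_le ((g m - g p - 2) / (m - p))
        simp only [hCdef]
        have habs2 : (0:ℝ) ≤ |(g q - g m + 2) / (q - m)| := abs_nonneg _
        linarith
      · have := le_abs_self ((g q - g m + 2) / (q - m))
        simp only [hCdef]
        have habs1 : (0:ℝ) ≤ |(g m - g p - 2) / (m - p)| := abs_nonneg _
        linarith
    obtain ⟨c, hmc, hcb, hbc1, hcprop⟩ := tail_pick_right hab hg hε₁
    obtain ⟨c', hac', hc'm, hc'a, hc'prop⟩ := tail_pick_left hab hg hε₁
    rw [← hm] at hmc hc'm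
    have hac : a < c := ham.trans hmc
    have hc'b : c' < b := hc'm.trans hmb
    have hsubR : Set.Ioo c b ⊆ Set.Ioo a b := fun x hx => ⟨hac.trans hx.1, hx.2⟩
    have hsubL : Set.Ioo a c' ⊆ Set.Ioo a b := fun x hx => ⟨hx.1, hx.2.trans hc'b⟩
    have hsubM : Set.Icc c' c ⊆ Set.Ioo a b := fun x hx =>
      ⟨hac'.trans_le hx.1, hx.2.trans_lt hcb⟩
    -- right tail, per n
    have hBn : ∀ᶠ n in atTop, (∫⁻ x in Set.Ioo c b, ENNReal.ofReal |deriv (f n) x|)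
        ≤ ENNReal.ofReal ((3 + 2*C) * ε₁) := by
      filter_upwards [hclose, hCbound] with n hn hCn
      set t := deriv (f n) m with htdef
      have hmono_t : ∀ x ∈ Set.Ioo c b, t ≤ deriv (f n) x := fun x hx =>
        hmder n hmIoo (hsubR hx) (hmc.trans hx.1).le
      have step1 : (∫⁻ x in Set.Ioo c b, ENNReal.ofReal |deriv (f n) x|)
          ≤ ∫⁻ x in Set.Ioo c b, (ENNReal.ofReal (deriv (f n) x - t) + ENNReal.ofReal |t|) := by
        apply setLIntegral_mono (((hHm n).sub measurable_const).ennreal_ofReal.add measurable_const)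
        intro x hx
        have h1 : t ≤ deriv (f n) x := hmono_t x hx
        have h2 : |deriv (f n) x| ≤ (deriv (f n) x - t) + |t| := by
          rw [abs_le]
          constructor
          · have := neg_abs_le t; linarith
          · have := le_abs_self t; linarith
        exact (ENNReal.ofReal_le_ofReal h2).trans ENNReal.ofReal_add_le
      have step2 : (∫⁻ x in Set.Ioo c b, (ENNReal.ofReal (deriv (f n) x - t) + ENNReal.ofReal |t|))
          = (∫⁻ x in Set.Ioo c b, ENNReal.ofReal (deriv (f n) x - t))
            + ENNReal.ofReal |t| * volume (Set.Ioo c b) := by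
        rw [lintegral_add_right _ measurable_const, setLIntegral_const]
      have step3 : (∫⁻ x in Set.Ioo c b, ENNReal.ofReal (deriv (f n) x - t))
          ≤ ENNReal.ofReal ((3 + C) * ε₁) := by
        apply tail_right hac hcb (hdiff n) (hmder n) hmono_t
        intro u hu
        have heu := abs_le.1 ((hn u ⟨(hac.trans hu.1).le, hu.2.le⟩).trans (min_le_right _ _))
        have hec := abs_le.1 ((hn c ⟨hac.le, hcb.le⟩).trans (min_le_right _ _))
        have hgu : g u - g c ≤ ε₁ := hcprop u hu
        have h1 : 0 ≤ u - c := by linarith [hu.1]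
        have h2 : u - c ≤ ε₁ := by linarith [hu.2]
        have h3 : -((u - c) * t) ≤ (u - c) * |t| := by
          calc -((u - c) * t) = (u - c) * (-t) := by ring
            _ ≤ (u - c) * |t| := mul_le_mul_of_nonneg_left (neg_le_abs t) h1
        have h4 : (u - c) * |t| ≤ ε₁ * C := mul_le_mul h2 hCn (abs_nonneg t) hε₁.le
        have hring : (3 + C) * ε₁ = 3 * ε₁ + ε₁ * C := by ring
        rw [hring]
        linarith
      have step4 : ENNReal.ofReal |t| * volume (Set.Ioo c b) ≤ ENNReal.ofReal (C * ε₁) := by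
        rw [Real.volume_Ioo, ← ENNReal.ofReal_mul (abs_nonneg t)]
        apply ENNReal.ofReal_le_ofReal
        exact mul_le_mul hCn hbc1 (by linarith) hC0
      calc (∫⁻ x in Set.Ioo c b, ENNReal.ofReal |deriv (f n) x|)
          ≤ _ := step1
        _ = _ := step2
        _ ≤ ENNReal.ofReal ((3 + C) * ε₁) + ENNReal.ofReal (C * ε₁) := add_le_add step3 step4
        _ = ENNReal.ofReal ((3 + 2*C) * ε₁) := by
            rw [← ENNReal.ofReal_add (mul_nonneg (by linarith) hε₁.le)
              (mul_nonneg hC0 hε₁.le)]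
            congr 1
            ring
    -- left tail, per n
    have hLn : ∀ᶠ n in atTop, (∫⁻ x in Set.Ioo a c', ENNReal.ofReal |deriv (f n) x|)
        ≤ ENNReal.ofReal ((3 + 2*C) * ε₁) := by
      filter_upwards [hclose, hCbound] with n hn hCn
      set t := deriv (f n) m with htdef
      have hmono_t : ∀ x ∈ Set.Ioo a c', deriv (f n) x ≤ t := fun x hx =>
        hmder n (hsubL hx) hmIoo (hx.2.trans hc'm).le
      have step1 : (∫⁻ x in Set.Ioo a c', ENNReal.ofReal |deriv (f n) x|)
          ≤ ∫⁻ x in Set.Ioo a c', (ENNReal.ofReal (t - deriv (f n) x) + ENNReal.ofReal |t|) := by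
        apply setLIntegral_mono ((measurable_const.sub (hHm n)).ennreal_ofReal.add measurable_const)
        intro x hx
        have h1 : deriv (f n) x ≤ t := hmono_t x hx
        have h2 : |deriv (f n) x| ≤ (t - deriv (f n) x) + |t| := by
          rw [abs_le]
          constructor
          · have := neg_abs_le t; linarith
          · have := le_abs_self t; linarith
        exact (ENNReal.ofReal_le_ofReal h2).trans ENNReal.ofReal_add_le
      have step2 : (∫⁻ x in Set.Ioo a c', (ENNReal.ofReal (t - deriv (f n) x) + ENNReal.ofReal |t|))
          = (∫⁻ x in Set.Ioo a c', ENNReal.ofReal (t - deriv (f n) x))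
            + ENNReal.ofReal |t| * volume (Set.Ioo a c') := by
        rw [lintegral_add_right _ measurable_const, setLIntegral_const]
      have step3 : (∫⁻ x in Set.Ioo a c', ENNReal.ofReal (t - deriv (f n) x))
          ≤ ENNReal.ofReal ((3 + C) * ε₁) := by
        apply tail_left hac' hc'b (hdiff n) (hmder n) hmono_t
        intro u hu
        have heu := abs_le.1 ((hn u ⟨hu.1.le, (hu.2.trans hc'b).le⟩).trans (min_le_right _ _))
        have hec := abs_le.1 ((hn c' ⟨hac'.le, hc'b.le⟩).trans (min_le_right _ _))
        have hgu : g u - g c' ≤ ε₁ := hc'prop u hu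
        have h1 : 0 ≤ c' - u := by linarith [hu.2]
        have h2 : c' - u ≤ ε₁ := by linarith [hu.1]
        have h3 : (c' - u) * t ≤ (c' - u) * |t| :=
          mul_le_mul_of_nonneg_left (le_abs_self t) h1
        have h4 : (c' - u) * |t| ≤ ε₁ * C := mul_le_mul h2 hCn (abs_nonneg t) hε₁.le
        have hring : (3 + C) * ε₁ = 3 * ε₁ + ε₁ * C := by ring
        rw [hring]
        linarith
      have step4 : ENNReal.ofReal |t| * volume (Set.Ioo a c') ≤ ENNReal.ofReal (C * ε₁) := by
        rw [Real.volume_Ioo, ← ENNReal.ofReal_mul (abs_nonneg t)]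
        apply ENNReal.ofReal_le_ofReal
        exact mul_le_mul hCn hc'a (by linarith) hC0
      calc (∫⁻ x in Set.Ioo a c', ENNReal.ofReal |deriv (f n) x|)
          ≤ _ := step1
        _ = _ := step2
        _ ≤ ENNReal.ofReal ((3 + C) * ε₁) + ENNReal.ofReal (C * ε₁) := add_le_add step3 step4
        _ = ENNReal.ofReal ((3 + 2*C) * ε₁) := by
            rw [← ENNReal.ofReal_add (mul_nonneg (by linarith) hε₁.le)
              (mul_nonneg hC0 hε₁.le)]
            congr 1
            ring
    -- Fatou for g on both tails
    have hFatou : ∀ s : Set ℝ, s ⊆ Set.Ioo a b →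
        (∀ᶠ n in atTop, (∫⁻ x in s, ENNReal.ofReal |deriv (f n) x|)
          ≤ ENNReal.ofReal ((3 + 2*C) * ε₁)) →
        (∫⁻ x in s, ENNReal.ofReal |deriv g x|) ≤ ENNReal.ofReal ((3 + 2*C) * ε₁) := by
      intro s hs hev
      have haes : ∀ᵐ x ∂(volume.restrict s),
          Tendsto (fun n => deriv (f n) x) atTop (𝓝 (deriv g x)) :=
        ae_restrict_of_ae_restrict_of_subset hs haeconv
      have step1 : (∫⁻ x in s, ENNReal.ofReal |deriv g x|)
          ≤ ∫⁻ x in s, Filter.liminf (fun n => ENNReal.ofReal |deriv (f n) x|) atTop := by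
        apply lintegral_mono_ae
        filter_upwards [haes] with x hx
        have ht : Tendsto (fun n => ENNReal.ofReal |deriv (f n) x|) atTop
            (𝓝 (ENNReal.ofReal |deriv g x|)) := ENNReal.tendsto_ofReal hx.abs
        exact ht.liminf_eq.ge
      refine step1.trans ?_
      refine (lintegral_liminf_le fun n => (hHm n).abs.ennreal_ofReal).trans ?_
      have hls : Filter.liminf (fun n => ∫⁻ x in s, ENNReal.ofReal |deriv (f n) x|) atTop
          ≤ Filter.limsup (fun n => ∫⁻ x in s, ENNReal.ofReal |deriv (f n) x|) atTop :=
        liminf_le_limsup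
      have hlim : Filter.limsup (fun n => ∫⁻ x in s, ENNReal.ofReal |deriv (f n) x|) atTop
          ≤ ENNReal.ofReal ((3 + 2*C) * ε₁) := limsup_le_of_le (h := hev)
      exact hls.trans hlim
    have hBG : (∫⁻ x in Set.Ioo c b, ENNReal.ofReal |deriv g x|)
        ≤ ENNReal.ofReal ((3 + 2*C) * ε₁) := hFatou _ hsubR hBn
    have hLG : (∫⁻ x in Set.Ioo a c', ENNReal.ofReal |deriv g x|)
        ≤ ENNReal.ofReal ((3 + 2*C) * ε₁) := hFatou _ hsubL hLn
    -- combine tails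
    have hquarter : (3 + 2*C) * ε₁ + (3 + 2*C) * ε₁ ≤ ε₀ / 4 := by
      have hC1 : (0:ℝ) < C + 1 := by linarith
      have hmono6 : (6 + 4*C) * ε₁ ≤ 6 * (C + 1) * ε₁ :=
        mul_le_mul_of_nonneg_right (by linarith) hε₁.le
      have heq6 : 6 * (C + 1) * ε₁ = ε₀ / 4 := by
        rw [hε₁def]; field_simp; ring
      calc (3 + 2*C) * ε₁ + (3 + 2*C) * ε₁ = (6 + 4*C) * ε₁ := by ring
        _ ≤ 6 * (C + 1) * ε₁ := hmono6
        _ = ε₀ / 4 := heq6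
    have htailbound : ∀ (s : Set ℝ) (n : ℕ),
        (∫⁻ x in s, ENNReal.ofReal |deriv (f n) x|) ≤ ENNReal.ofReal ((3 + 2*C) * ε₁) →
        (∫⁻ x in s, ENNReal.ofReal |deriv g x|) ≤ ENNReal.ofReal ((3 + 2*C) * ε₁) →
        (∫⁻ x in s, ENNReal.ofReal |deriv (f n) x - deriv g x|) ≤ ENNReal.ofReal (ε₀ / 4) := by
      intro s n h1 h2
      have hsplit : (∫⁻ x in s, ENNReal.ofReal |deriv (f n) x - deriv g x|)
          ≤ (∫⁻ x in s, ENNReal.ofReal |deriv (f n) x|)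
            + ∫⁻ x in s, ENNReal.ofReal |deriv g x| := by
        rw [← lintegral_add_left (hHm n).abs.ennreal_ofReal]
        apply lintegral_mono
        intro x
        have htri : |deriv (f n) x - deriv g x| ≤ |deriv (f n) x| + |deriv g x| := by
          rw [sub_eq_add_neg]
          exact (abs_add_le _ _).trans (by rw [abs_neg])
        exact (ENNReal.ofReal_le_ofReal htri).trans ENNReal.ofReal_add_le
      refine hsplit.trans ((add_le_add h1 h2).trans ?_)
      have hnn32 : (0:ℝ) ≤ (3 + 2*C) * ε₁ := mul_nonneg (by linarith) hε₁.le
      rw [← ENNReal.ofReal_add hnn32 hnn32]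
      exact ENNReal.ofReal_le_ofReal hquarter
    have hRight : ∀ᶠ n in atTop, (∫⁻ x in Set.Ioo c b,
        ENNReal.ofReal |deriv (f n) x - deriv g x|) ≤ ENNReal.ofReal (ε₀ / 4) := by
      filter_upwards [hBn] with n hn using htailbound _ n hn hBG
    have hLeft : ∀ᶠ n in atTop, (∫⁻ x in Set.Ioo a c',
        ENNReal.ofReal |deriv (f n) x - deriv g x|) ≤ ENNReal.ofReal (ε₀ / 4) := by
      filter_upwards [hLn] with n hn using htailbound _ n hn hLG
    -- middle by dominated convergence
    have hMid : Tendsto (fun n => ∫⁻ x in Set.Icc c' c,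
        ENNReal.ofReal |deriv (f n) x - deriv g x|) atTop (𝓝 0) := by
      obtain ⟨N, hN⟩ := eventually_atTop.1 hclose
      rw [← tendsto_add_atTop_iff_nat N]
      set a₁ := (a + c') / 2 with ha₁def
      set b₁ := (c + b) / 2 with hb₁def
      have ha₁ : a < a₁ := by simp only [ha₁def]; linarith
      have ha₁c : a₁ < c' := by simp only [ha₁def]; linarith
      have hcb₁ : c < b₁ := by simp only [hb₁def]; linarith
      have hb₁b : b₁ < b := by simp only [hb₁def]; linarith
      have hc'c : c' < c := hc'm.trans hmc
      set C₃ := |(g c' - g a₁ - 2) / (c' - a₁)| + |(g b₁ - g c + 2) / (b₁ - c)| with hC₃def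
      have hC₃0 : (0:ℝ) ≤ C₃ := by positivity
      have hbound : ∀ k : ℕ, ∀ x ∈ Set.Icc c' c, |deriv (f (k + N)) x| ≤ C₃ := by
        intro k x hx
        have hnk := hN (k + N) (Nat.le_add_left N k)
        have hxI : x ∈ Set.Ioo a b := hsubM hx
        have hc'I : c' ∈ Set.Ioo a b := ⟨hac', hc'b⟩
        have hcI : c ∈ Set.Ioo a b := ⟨hac, hcb⟩
        have hca₁' : (0:ℝ) < c' - a₁ := by linarith
        have hb₁c' : (0:ℝ) < b₁ - c := by linarith
        have hea := abs_le.1 ((hnk a₁ ⟨ha₁.le, by linarith⟩).trans (min_le_left _ _))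
        have hec' := abs_le.1 ((hnk c' ⟨hac'.le, hc'b.le⟩).trans (min_le_left _ _))
        have hec := abs_le.1 ((hnk c ⟨hac.le, hcb.le⟩).trans (min_le_left _ _))
        have heb := abs_le.1 ((hnk b₁ ⟨by linarith, hb₁b.le⟩).trans (min_le_left _ _))
        have hlow : (g c' - g a₁ - 2) / (c' - a₁) ≤ deriv (f (k + N)) x := by
          have hs : slope (f (k + N)) a₁ c' ≤ deriv (f (k + N)) c' :=
            (hconv _).slope_le_deriv ⟨ha₁.le, by linarith⟩ ⟨hac'.le, hc'b.le⟩ ha₁c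
              (hdiff _ c' hc'I)
          rw [slope_def_field] at hs
          have hmono' : deriv (f (k + N)) c' ≤ deriv (f (k + N)) x :=
            hmder _ hc'I hxI hx.1
          refine le_trans ((div_le_div_iff_of_pos_right hca₁').2 (by linarith)) (hs.trans hmono')
        have hhigh : deriv (f (k + N)) x ≤ (g b₁ - g c + 2) / (b₁ - c) := by
          have hs : deriv (f (k + N)) c ≤ slope (f (k + N)) c b₁ :=
            (hconv _).deriv_le_slope ⟨hac.le, hcb.le⟩ ⟨by linarith, hb₁b.le⟩ hcb₁
              (hdiff _ c hcI)
          rw [slope_def_field] at hs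
          have hmono' : deriv (f (k + N)) x ≤ deriv (f (k + N)) c :=
            hmder _ hxI hcI hx.2
          exact (hmono'.trans hs).trans ((div_le_div_iff_of_pos_right hb₁c').2 (by linarith))
        have habs1 : (0:ℝ) ≤ |(g c' - g a₁ - 2) / (c' - a₁)| := abs_nonneg _
        have habs2 : (0:ℝ) ≤ |(g b₁ - g c + 2) / (b₁ - c)| := abs_nonneg _
        have hn1 := neg_abs_le ((g c' - g a₁ - 2) / (c' - a₁))
        have hn2 := le_abs_self ((g b₁ - g c + 2) / (b₁ - c))
        rw [abs_le]
        constructor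
        · simp only [hC₃def]; linarith
        · simp only [hC₃def]; linarith
      have haeconv_m : ∀ᵐ x ∂(volume.restrict (Set.Icc c' c)),
          Tendsto (fun n => deriv (f n) x) atTop (𝓝 (deriv g x)) :=
        ae_restrict_of_ae_restrict_of_subset hsubM haeconv
      have haeG : ∀ᵐ x ∂(volume.restrict (Set.Icc c' c)), |deriv g x| ≤ C₃ := by
        filter_upwards [haeconv_m, ae_restrict_mem measurableSet_Icc] with x hx hxm
        have ht : Tendsto (fun k => |deriv (f (k + N)) x|) atTop (𝓝 |deriv g x|) :=
          ((hx.comp (tendsto_add_atTop_nat N))).abs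
        exact le_of_tendsto ht (Filter.Eventually.of_forall fun k => hbound k x hxm)
      have hdct := tendsto_lintegral_of_dominated_convergence
        (μ := volume.restrict (Set.Icc c' c))
        (F := fun k x => ENNReal.ofReal |deriv (f (k + N)) x - deriv g x|)
        (f := fun _ => 0) (bound := fun _ => ENNReal.ofReal (2 * C₃))
        (fun k => ((hHm (k + N)).sub hGm).abs.ennreal_ofReal)
        (fun k => by
          filter_upwards [haeG, ae_restrict_mem measurableSet_Icc] with x h1 h2
          apply ENNReal.ofReal_le_ofReal
          have htri : |deriv (f (k + N)) x - deriv g x|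
              ≤ |deriv (f (k + N)) x| + |deriv g x| := by
            rw [sub_eq_add_neg]; exact (abs_add_le _ _).trans (by rw [abs_neg])
          have := hbound k x h2
          linarith)
        (by
          rw [setLIntegral_const]
          exact ENNReal.mul_ne_top ENNReal.ofReal_ne_top (measure_Icc_lt_top).ne)
        (by
          filter_upwards [haeconv_m] with x hx
          have h0 : Tendsto (fun k => |deriv (f (k + N)) x - deriv g x|) atTop (𝓝 0) := by
            have h1 := ((hx.comp (tendsto_add_atTop_nat N)).sub_const (deriv g x)).abs
            simpa using h1
          have h1 := ENNReal.tendsto_ofReal h0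
          simpa using h1)
      simpa using hdct
    have hMid' : ∀ᶠ n in atTop, (∫⁻ x in Set.Icc c' c,
        ENNReal.ofReal |deriv (f n) x - deriv g x|) ≤ ENNReal.ofReal (ε₀ / 2) :=
      (ENNReal.tendsto_nhds_zero.1 hMid) _ (ENNReal.ofReal_pos.2 (by linarith))
    filter_upwards [hRight, hLeft, hMid'] with n h1 h2 h3
    have hsubset : Set.Ioo a b ⊆ (Set.Ioo a c' ∪ Set.Icc c' c) ∪ Set.Ioo c b := by
      intro x hx
      rcases lt_or_ge x c' with h | h
      · exact Or.inl (Or.inl ⟨hx.1, h⟩)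
      rcases le_or_gt x c with h' | h'
      · exact Or.inl (Or.inr ⟨h, h'⟩)
      · exact Or.inr ⟨h', hx.2⟩
    calc (∫⁻ x in Set.Ioo a b, ENNReal.ofReal |deriv (f n) x - deriv g x|)
        ≤ ∫⁻ x in (Set.Ioo a c' ∪ Set.Icc c' c) ∪ Set.Ioo c b,
            ENNReal.ofReal |deriv (f n) x - deriv g x| := lintegral_mono_set hsubset
      _ ≤ ((∫⁻ x in Set.Ioo a c', ENNReal.ofReal |deriv (f n) x - deriv g x|)
            + ∫⁻ x in Set.Icc c' c, ENNReal.ofReal |deriv (f n) x - deriv g x|)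
            + ∫⁻ x in Set.Ioo c b, ENNReal.ofReal |deriv (f n) x - deriv g x| := by
          refine (lintegral_union_le _ _ _).trans ?_
          exact add_le_add_left (lintegral_union_le _ _ _) _
      _ ≤ (ENNReal.ofReal (ε₀/4) + ENNReal.ofReal (ε₀/2)) + ENNReal.ofReal (ε₀/4) :=
          add_le_add (add_le_add h2 h3) h1
      _ ≤ ENNReal.ofReal ε₀ := by
          rw [← ENNReal.ofReal_add (by linarith : (0:ℝ) ≤ ε₀ / 4) (by linarith : (0:ℝ) ≤ ε₀ / 2),
            ← ENNReal.ofReal_add (by linarith : (0:ℝ) ≤ ε₀ / 4 + ε₀ / 2)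
              (by linarith : (0:ℝ) ≤ ε₀ / 4)]
          apply ENNReal.ofReal_le_ofReal
          linarith
  have heq : ∀ n, (∫ x in Set.Ioo a b, |deriv (f n) x - deriv g x|)
      = (∫⁻ x in Set.Ioo a b, ENNReal.ofReal |deriv (f n) x - deriv g x|).toReal := by
    intro n
    rw [integral_eq_lintegral_of_nonneg_ae (f := fun x => |deriv (f n) x - deriv g x|) (Filter.Eventually.of_forall fun x => abs_nonneg _)
      ((hHm n).sub hGm).abs.aestronglyMeasurable]
  have h2 := (ENNReal.tendsto_toReal (by simp : (0:ℝ≥0∞) ≠ ⊤)).comp main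
  simp only [Function.comp_def, ENNReal.toReal_zero] at h2
  exact h2.congr fun n => (heq n).symm
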